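/- Let C be a v_0-unsolvable configuration on the Flower snark J_3 with C(z_0) = C(v_1) = C(v_{−1}) = 0, let E = {x_0, y_0}, and let X be either of the sets A = {z_1, x_1, y_1} or B = {z_{−1}, x_{−1}, y_{−1}}. Then C(X) + 2·C(E) ≤ 11, where C(S) denotes the total number of pebbles on the vertices of S. -/

import Mathlib

/-- A pebbling move on the graph `G`: remove two pebbles from a vertex `u`
(which has at least two pebbles) and add one pebble to a neighbor `v` of `u`. -/
def PebblingMove {V : Type} [DecidableEq V] (G : SimpleGraph V) (C C' : V → ℕ) : Prop :=
  ∃ u v, G.Adj u v ∧ 2 ≤ C u ∧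
    C' = fun w => if w = u then C u - 2 else if w = v then C v + 1 else C w

/-- A configuration `C` is `r`-solvable if some (possibly empty) sequence of
pebbling moves starting from `C` produces a configuration with at least one
pebble on `r`. -/
def PebblingSolvable {V : Type} [DecidableEq V] (G : SimpleGraph V) (C : V → ℕ) (r : V) : Prop :=
  ∃ C' : V → ℕ, Relation.ReflTransGen (PebblingMove G) C C' ∧ 1 ≤ C' r

/-- The pebbling number of `G`: the least `t` such that for every target
vertex `r`, every configuration of size `t` is `r`-solvable. -/
noncomputable def pebblingNumber {V : Type} [DecidableEq V] [Fintype V] (G : SimpleGraph V) : ℕ :=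
  sInf {t : ℕ | ∀ (r : V) (C : V → ℕ), (∑ v, C v) = t → PebblingSolvable G C r}

/-- The 12 vertices of the Flower snark `J₃`; `vm` denotes `v_{-1}`,
`xm` denotes `x_{-1}`, etc. -/
inductive J3V : Type
  | v0 | v1 | vm | x0 | x1 | xm | y0 | y1 | ym | z0 | z1 | zm
  deriving DecidableEq

open J3V in
instance : Fintype J3V where
  elems := {v0, v1, vm, x0, x1, xm, y0, y1, ym, z0, z1, zm}
  complete := by intro x; cases x <;> first | decide | simp

open J3V in
/-- The Flower snark `J₃` (Tietze's graph), with its 18 edges. -/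
def J3 : SimpleGraph J3V := SimpleGraph.fromEdgeSet
  ({s(z0, v0), s(z0, x0), s(z0, y0), s(v0, v1), s(v0, vm),
    s(x0, x1), s(x0, xm), s(y0, y1), s(y0, ym), s(v1, vm),
    s(v1, z1), s(vm, zm), s(x1, z1), s(y1, z1), s(xm, zm),
    s(ym, zm), s(xm, y1), s(x1, ym)} : Set (Sym2 J3V))

lemma pebbling_transfer {V : Type} [DecidableEq V] {G : SimpleGraph V} {u v : V}
    (huv : G.Adj u v) (C : V → ℕ) (k : ℕ) (hk : 2*k ≤ C u) :
    Relation.ReflTransGen (PebblingMove G) C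
      (fun w => if w = u then C u - 2*k else if w = v then C v + k else C w) := by
  induction k generalizing C with
  | zero =>
    have : (fun w => if w = u then C u - 2*0 else if w = v then C v + 0 else C w) = C := by
      funext w; split <;> rename_i h1
      · subst h1; omega
      · split <;> rename_i h2
        · subst h2; rfl
        · rfl
    rw [this]
  | succ k ih =>
    have hne := huv.ne
    have step : PebblingMove G C
        (fun w => if w = u then C u - 2 else if w = v then C v + 1 else C w) :=
      ⟨u, v, huv, by omega, rfl⟩
    refine Relation.ReflTransGen.head step ?_
    set C1 : V → ℕ := (fun w => if w = u then C u - 2 else if w = v then C v + 1 else C w)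
      with hC1
    have h2 : 2*k ≤ C1 u := by simp [hC1]; omega
    have := ih C1 h2
    convert this using 1
    funext w
    simp only [hC1]
    by_cases h1 : w = u
    · subst h1; simp [hne]; omega
    · by_cases h2 : w = v
      · subst h2; simp [Ne.symm hne, hne]; omega
      · simp [h1, h2]

lemma step_solv {V : Type} [DecidableEq V] {G : SimpleGraph V} {u v r : V}
    (huv : G.Adj u v) (C : V → ℕ) (k : ℕ) (hk : 2*k ≤ C u)
    (hs : PebblingSolvable G
      (fun w => if w = u then C u - 2*k else if w = v then C v + k else C w) r) :
    PebblingSolvable G C r := by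
  obtain ⟨C', h1, h2⟩ := hs
  exact ⟨C', (pebbling_transfer huv C k hk).trans h1, h2⟩

lemma base_solv {V : Type} [DecidableEq V] {G : SimpleGraph V} {r : V} (C : V → ℕ)
    (h : 1 ≤ C r) : PebblingSolvable G C r :=
  ⟨C, Relation.ReflTransGen.refl, h⟩

lemma cover (a b c d e : ℕ) (h : 12 ≤ 2*a+2*b+c+d+e) :
    2 ≤ (a + d/2)/2 + (b + e/2)/2 ∨ 4 ≤ c + d/2 + e/2 ∨
    2 ≤ (a + (d + c/2)/2)/2 + b/2 ∨ 2 ≤ (b + (e + c/2)/2)/2 + a/2 := by omega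

open J3V in
lemma plus_solvable (C : J3V → ℕ)
    (h12 : 12 ≤ 2 * C x0 + 2 * C y0 + C z1 + C x1 + C y1) :
    PebblingSolvable J3 C v0 := by
  have A : ∀ u v : J3V, s(u, v) ∈ J3.edgeSet → J3.Adj u v := fun u v hm =>
    (J3.mem_edgeSet).1 hm
  have a1 : J3.Adj x1 x0 := by simp [J3, SimpleGraph.fromEdgeSet_adj]
  have a2 : J3.Adj y1 y0 := by simp [J3, SimpleGraph.fromEdgeSet_adj]
  have a3 : J3.Adj x1 z1 := by simp [J3, SimpleGraph.fromEdgeSet_adj]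
  have a4 : J3.Adj y1 z1 := by simp [J3, SimpleGraph.fromEdgeSet_adj]
  have a5 : J3.Adj z1 x1 := a3.symm
  have a6 : J3.Adj z1 y1 := a4.symm
  have a7 : J3.Adj z1 v1 := by simp [J3, SimpleGraph.fromEdgeSet_adj]
  have a8 : J3.Adj v1 v0 := by simp [J3, SimpleGraph.fromEdgeSet_adj]
  have a9 : J3.Adj x0 z0 := by simp [J3, SimpleGraph.fromEdgeSet_adj]
  have a10 : J3.Adj y0 z0 := by simp [J3, SimpleGraph.fromEdgeSet_adj]
  have a11 : J3.Adj z0 v0 := by simp [J3, SimpleGraph.fromEdgeSet_adj]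
  rcases cover (C x0) (C y0) (C z1) (C x1) (C y1) (by omega) with hc | hc | hc | hc
  · refine step_solv a1 C (C x1 / 2) (by omega) ?_
    refine step_solv a2 _ (C y1 / 2) (by simp; try omega) ?_
    refine step_solv a9 _ ((C x0 + C x1 / 2) / 2) (by simp; try omega) ?_
    refine step_solv a10 _ ((C y0 + C y1 / 2) / 2) (by simp; try omega) ?_
    refine step_solv a11 _ 1 (by simp; try omega) ?_
    exact base_solv _ (by simp)
  · refine step_solv a3 C (C x1 / 2) (by omega) ?_
    refine step_solv a4 _ (C y1 / 2) (by simp; try omega) ?_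
    refine step_solv a7 _ 2 (by simp; try omega) ?_
    refine step_solv a8 _ 1 (by simp; try omega) ?_
    exact base_solv _ (by simp)
  · refine step_solv a5 C (C z1 / 2) (by omega) ?_
    refine step_solv a1 _ ((C x1 + C z1 / 2) / 2) (by simp; try omega) ?_
    refine step_solv a9 _ ((C x0 + (C x1 + C z1 / 2) / 2) / 2) (by simp; try omega) ?_
    refine step_solv a10 _ (C y0 / 2) (by simp; try omega) ?_
    refine step_solv a11 _ 1 (by simp; try omega) ?_
    exact base_solv _ (by simp)
  · refine step_solv a6 C (C z1 / 2) (by omega) ?_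
    refine step_solv a2 _ ((C y1 + C z1 / 2) / 2) (by simp; try omega) ?_
    refine step_solv a10 _ ((C y0 + (C y1 + C z1 / 2) / 2) / 2) (by simp; try omega) ?_
    refine step_solv a9 _ (C x0 / 2) (by simp; try omega) ?_
    refine step_solv a11 _ 1 (by simp; try omega) ?_
    exact base_solv _ (by simp)
open J3V in
lemma minus_solvable (C : J3V → ℕ)
    (h12 : 12 ≤ 2 * C x0 + 2 * C y0 + C zm + C xm + C ym) :
    PebblingSolvable J3 C v0 := by
  have A : ∀ u v : J3V, s(u, v) ∈ J3.edgeSet → J3.Adj u v := fun u v hm =>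
    (J3.mem_edgeSet).1 hm
  have a1 : J3.Adj xm x0 := by simp [J3, SimpleGraph.fromEdgeSet_adj]
  have a2 : J3.Adj ym y0 := by simp [J3, SimpleGraph.fromEdgeSet_adj]
  have a3 : J3.Adj xm zm := by simp [J3, SimpleGraph.fromEdgeSet_adj]
  have a4 : J3.Adj ym zm := by simp [J3, SimpleGraph.fromEdgeSet_adj]
  have a5 : J3.Adj zm xm := a3.symm
  have a6 : J3.Adj zm ym := a4.symm
  have a7 : J3.Adj zm vm := by simp [J3, SimpleGraph.fromEdgeSet_adj]
  have a8 : J3.Adj vm v0 := by simp [J3, SimpleGraph.fromEdgeSet_adj]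
  have a9 : J3.Adj x0 z0 := by simp [J3, SimpleGraph.fromEdgeSet_adj]
  have a10 : J3.Adj y0 z0 := by simp [J3, SimpleGraph.fromEdgeSet_adj]
  have a11 : J3.Adj z0 v0 := by simp [J3, SimpleGraph.fromEdgeSet_adj]
  rcases cover (C x0) (C y0) (C zm) (C xm) (C ym) (by omega) with hc | hc | hc | hc
  · refine step_solv a1 C (C xm / 2) (by omega) ?_
    refine step_solv a2 _ (C ym / 2) (by simp; try omega) ?_
    refine step_solv a9 _ ((C x0 + C xm / 2) / 2) (by simp; try omega) ?_
    refine step_solv a10 _ ((C y0 + C ym / 2) / 2) (by simp; try omega) ?_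
    refine step_solv a11 _ 1 (by simp; try omega) ?_
    exact base_solv _ (by simp)
  · refine step_solv a3 C (C xm / 2) (by omega) ?_
    refine step_solv a4 _ (C ym / 2) (by simp; try omega) ?_
    refine step_solv a7 _ 2 (by simp; try omega) ?_
    refine step_solv a8 _ 1 (by simp; try omega) ?_
    exact base_solv _ (by simp)
  · refine step_solv a5 C (C zm / 2) (by omega) ?_
    refine step_solv a1 _ ((C xm + C zm / 2) / 2) (by simp; try omega) ?_
    refine step_solv a9 _ ((C x0 + (C xm + C zm / 2) / 2) / 2) (by simp; try omega) ?_
    refine step_solv a10 _ (C y0 / 2) (by simp; try omega) ?_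
    refine step_solv a11 _ 1 (by simp; try omega) ?_
    exact base_solv _ (by simp)
  · refine step_solv a6 C (C zm / 2) (by omega) ?_
    refine step_solv a2 _ ((C ym + C zm / 2) / 2) (by simp; try omega) ?_
    refine step_solv a10 _ ((C y0 + (C ym + C zm / 2) / 2) / 2) (by simp; try omega) ?_
    refine step_solv a9 _ (C x0 / 2) (by simp; try omega) ?_
    refine step_solv a11 _ 1 (by simp; try omega) ?_
    exact base_solv _ (by simp)
/-- For a `v₀`-unsolvable configuration `C` on `J₃` with
`C(z₀) = C(v₁) = C(v₋₁) = 0`, with `E = {x₀, y₀}` and `X` either of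
`A = {z₁, x₁, y₁}` or `B = {z₋₁, x₋₁, y₋₁}`, we have `C(X) + 2·C(E) ≤ 11`. -/
theorem J3_v0_unsolvable_XE (C : J3V → ℕ)
    (h : ¬ PebblingSolvable J3 C J3V.v0)
    (hz0 : C J3V.z0 = 0) (hv1 : C J3V.v1 = 0) (hvm : C J3V.vm = 0) :
    (∑ v ∈ ({J3V.z1, J3V.x1, J3V.y1} : Finset J3V), C v) +
      2 * (∑ v ∈ ({J3V.x0, J3V.y0} : Finset J3V), C v) ≤ 11 ∧
    (∑ v ∈ ({J3V.zm, J3V.xm, J3V.ym} : Finset J3V), C v) +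
      2 * (∑ v ∈ ({J3V.x0, J3V.y0} : Finset J3V), C v) ≤ 11 := by
  constructor
  · by_contra hc
    push_neg at hc
    refine h (plus_solvable C ?_)
    simp [Finset.sum_insert, Finset.mem_insert] at hc
    omega
  · by_contra hc
    push_neg at hc
    refine h (minus_solvable C ?_)
    simp [Finset.sum_insert, Finset.mem_insert] at hc
    omega
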